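/- Let ψ : G → G be a commutator-central endomorphism of a group G and let β, β' ∈ 𝓔. Then the operations ∘_{ψ,β} and ∘_{ψ,β'} coincide (i.e., g ∘_{ψ,β} h = g ∘_{ψ,β'} h for all g, h ∈ G) if and only if ψ((β · β'⁻¹)(g)) ∈ Z(G) for all g ∈ G, where β · β'⁻¹ is the product in the free group 𝓔. -/

import Mathlib

/-- Evaluation of an element of the free group `𝓔 = FreeGroup (Monoid.End G)`
at an element `g : G`: the image of `α` under the homomorphism `𝓔 → G`
given by `FreeGroup.lift (fun φ => φ g)`. -/
def evalE {G : Type*} [Group G] (α : FreeGroup (Monoid.End G)) (g : G) : G :=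
  FreeGroup.lift (fun φ : Monoid.End G => φ g) α

/-- The binary operation `g ∘_{ψ,α} h = g · ψ_α(g) · h · ψ_α(g)⁻¹`, where
`ψ_α(g) = ψ (α(g))`. -/
def op {G : Type*} [Group G] (ψ : Monoid.End G) (α : FreeGroup (Monoid.End G)) (g h : G) : G :=
  g * ψ (evalE α g) * h * (ψ (evalE α g))⁻¹

open scoped commutatorElement

/-- `∘_{ψ,β} = ∘_{ψ,β'}` if and only if `ψ((β·β'⁻¹)(g))` is
central for every `g`. -/
theorem op_eq_iff_center {G : Type*} [Group G]
    (ψ : Monoid.End G) (hψ : ∀ g h : G, ψ ⁅g, h⁆ ∈ Subgroup.center G)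
    (β β' : FreeGroup (Monoid.End G)) :
    (∀ g h : G, op ψ β g h = op ψ β' g h) ↔
      ∀ g : G, ψ (evalE (β * β'⁻¹) g) ∈ Subgroup.center G := by
  have key : ∀ g : G, ψ (evalE (β * β'⁻¹) g)
      = ψ (evalE β g) * (ψ (evalE β' g))⁻¹ := by
    intro g
    simp [evalE, map_mul, map_inv]
  constructor
  · intro H g
    rw [key, Subgroup.mem_center_iff]
    intro h
    set a := ψ (evalE β g) with ha
    set b := ψ (evalE β' g) with hb
    have h2 := H g (b⁻¹ * h * b)
    unfold op at h2
    rw [← ha, ← hb] at h2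
    have h3 : a * b⁻¹ * h * b * a⁻¹ = h := by
      calc a * b⁻¹ * h * b * a⁻¹ = g⁻¹ * (g * a * (b⁻¹ * h * b) * a⁻¹) := by group
        _ = g⁻¹ * (g * b * (b⁻¹ * h * b) * b⁻¹) := by rw [h2]
        _ = h := by group
    calc h * (a * b⁻¹) = (a * b⁻¹ * h * b * a⁻¹) * (a * b⁻¹) := by rw [h3]
      _ = a * b⁻¹ * h := by group
  · intro H g h
    have hc := H g
    rw [key, Subgroup.mem_center_iff] at hc
    set a := ψ (evalE β g) with ha
    set b := ψ (evalE β' g) with hb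
    unfold op
    rw [← ha, ← hb]
    have h2 : (a * b⁻¹) * (b * h * b⁻¹) = (b * h * b⁻¹) * (a * b⁻¹) := (hc _).symm
    have h3 : a * h * a⁻¹ = b * h * b⁻¹ := by
      calc a * h * a⁻¹ = (a * b⁻¹) * (b * h * b⁻¹) * (a * b⁻¹)⁻¹ := by group
        _ = (b * h * b⁻¹) * (a * b⁻¹) * (a * b⁻¹)⁻¹ := by rw [h2]
        _ = b * h * b⁻¹ := by group
    calc g * a * h * a⁻¹ = g * (a * h * a⁻¹) := by group
      _ = g * (b * h * b⁻¹) := by rw [h3]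
      _ = g * b * h * b⁻¹ := by group
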